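/- Neyman orthogonality (Lemma 1(iii)) in the outcome direction: the Gateaux derivative of E[S0 + S1 + S2] with respect to perturbations of (η1, η2) around the true values (η1*, η2*), holding π1 = π1*, π2 = π2* fixed, vanishes: d/dr |_{r=0} E[ Ψ(θ, η* + r δ_η, π*) ] = 0 for any bounded measurable perturbation δ_η = (δ_{η1}, δ_{η2}). -/

import Mathlib

open MeasureTheory Filter

/-- Indicator (as a real-valued function) of the event `A = a`. -/
noncomputable def ind {Ω : Type*} (A : Ω → Bool) (a : Bool) : Ω → ℝ :=
  fun ω => if A ω = a then 1 else 0

lemma aux_int_bd {Ω : Type*} {m0 : MeasurableSpace Ω} {μ : @Measure Ω m0} [IsFiniteMeasure μ]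
    {f : Ω → ℝ} {c : ℝ} (hf : AEStronglyMeasurable f μ) (h : ∀ᵐ ω ∂μ, |f ω| ≤ c) :
    Integrable f μ :=
  (integrable_const c).mono' hf (by simpa [Real.norm_eq_abs] using h)

lemma aux_pullout {Ω : Type*} {m0 m : MeasurableSpace Ω} (hm : m ≤ m0)
    {μ : @Measure Ω m0} [IsFiniteMeasure μ] {X g : Ω → ℝ}
    (hX : Integrable X μ) (hg : StronglyMeasurable[m] g)
    (hgX : Integrable (fun ω => g ω * X ω) μ) :
    ∫ ω, g ω * X ω ∂μ = ∫ ω, g ω * (μ[X|m]) ω ∂μ := by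
  have h1 : μ[g * X|m] =ᵐ[μ] g * μ[X|m] := condExp_mul_of_stronglyMeasurable_left hg hgX hX
  calc ∫ ω, g ω * X ω ∂μ = ∫ ω, (μ[g * X|m]) ω ∂μ := (integral_condExp hm).symm
    _ = ∫ ω, g ω * (μ[X|m]) ω ∂μ := integral_congr_ae h1

lemma aux_ind_meas {Ω : Type*} {m0 : MeasurableSpace Ω} {A : Ω → Bool}
    (hA : Measurable[m0] A) (b : Bool) : Measurable[m0] (ind A b) := by
  unfold ind
  exact Measurable.ite (hA (MeasurableSet.singleton b)) measurable_const measurable_const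

lemma aux_ind_bd {Ω : Type*} (A : Ω → Bool) (b : Bool) (ω : Ω) : |ind A b ω| ≤ 1 := by
  unfold ind; split <;> simp

lemma aux_key {Ω : Type*} {m0 m1 m2 : MeasurableSpace Ω}
    (hm1 : m1 ≤ m0) (hm2 : m2 ≤ m0) (hm12 : m1 ≤ m2)
    (μ : @Measure Ω m0) [IsProbabilityMeasure μ]
    (X1 X2 : Ω → ℝ)
    (hX1m : Measurable[m0] X1) (hX2m : Measurable[m0] X2)
    (hX1b : ∀ ω, |X1 ω| ≤ 1) (hX2b : ∀ ω, |X2 ω| ≤ 1)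
    (p1 pJ p2 : Ω → ℝ) (ε : ℝ) (hε : 0 < ε)
    (hp1 : p1 =ᵐ[μ] μ[X1|m1])
    (hpJ : pJ =ᵐ[μ] μ[X1|m2])
    (hp2 : (fun ω => pJ ω * p2 ω) =ᵐ[μ] μ[fun ω => X1 ω * X2 ω|m2])
    (hp1b : ∀ᵐ ω ∂μ, ε ≤ p1 ω)
    (hp2b : ∀ᵐ ω ∂μ, ε ≤ p2 ω)
    (hpJb : ∀ᵐ ω ∂μ, 0 < pJ ω)
    (u v : Ω → ℝ) (C : ℝ)
    (hu : Measurable[m1] u) (hv : Measurable[m2] v)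
    (hub : ∀ ω, |u ω| ≤ C) (hvb : ∀ ω, |v ω| ≤ C) :
    Integrable (fun ω => u ω + X1 ω / p1 ω * (v ω - u ω)
      - X1 ω * X2 ω / (p1 ω * p2 ω) * v ω) μ ∧
    ∫ ω, (u ω + X1 ω / p1 ω * (v ω - u ω)
      - X1 ω * X2 ω / (p1 ω * p2 ω) * v ω) ∂μ = 0 := by
  set p1' : Ω → ℝ := μ[X1|m1] with hp1'def
  set pJ' : Ω → ℝ := μ[X1|m2] with hpJ'def
  set ρ : Ω → ℝ := μ[fun ω => X1 ω * X2 ω|m2] with hρdef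
  set p2' : Ω → ℝ := fun ω => ρ ω / pJ' ω with hp2'def
  have sp1 : Measurable[m1] p1' := (stronglyMeasurable_condExp (m := m1)).measurable
  have spJ : Measurable[m2] pJ' := (stronglyMeasurable_condExp (m := m2)).measurable
  have sρ : Measurable[m2] ρ := (stronglyMeasurable_condExp (m := m2)).measurable
  have sp2 : Measurable[m2] p2' := sρ.div spJ
  have hX1int : Integrable X1 μ :=
    aux_int_bd (c := 1) (hX1m.aestronglyMeasurable) (Eventually.of_forall hX1b)
  have hX12int : Integrable (fun ω => X1 ω * X2 ω) μ := by
    refine aux_int_bd (c := 1) ((hX1m.mul hX2m).aestronglyMeasurable)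
      (Eventually.of_forall fun ω => ?_)
    rw [abs_mul]
    nlinarith [abs_nonneg (X1 ω), abs_nonneg (X2 ω), hX1b ω, hX2b ω]
  have hAE : ∀ᵐ ω ∂μ, p1 ω = p1' ω ∧ ε ≤ p1' ω ∧ p2 ω = p2' ω ∧ ε ≤ p2' ω ∧
      ρ ω = pJ' ω * p2' ω := by
    filter_upwards [hp1, hpJ, hp2, hp1b, hp2b, hpJb] with ω e1 eJ e2 b1 b2 bJ
    have hJne : pJ ω ≠ 0 := ne_of_gt bJ
    have e2' : p2 ω = p2' ω := by
      rw [hp2'def]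
      show _ = ρ ω / pJ' ω
      rw [← e2, ← eJ]
      field_simp
    refine ⟨e1, e1 ▸ b1, e2', e2' ▸ b2, ?_⟩
    rw [← e2', ← eJ, ← e2]
  set g1 : Ω → ℝ := fun ω => u ω / p1' ω with hg1def
  set g2 : Ω → ℝ := fun ω => v ω / p1' ω with hg2def
  set g3 : Ω → ℝ := fun ω => v ω / (p1' ω * p2' ω) with hg3def
  have sg1 : StronglyMeasurable[m1] g1 := (hu.div sp1).stronglyMeasurable
  have sg2 : StronglyMeasurable[m2] g2 :=
    (hv.div (sp1.mono hm12 le_rfl)).stronglyMeasurable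
  have sg3 : StronglyMeasurable[m2] g3 :=
    (hv.div ((sp1.mono hm12 le_rfl).mul sp2)).stronglyMeasurable
  have hint1 : Integrable u μ :=
    aux_int_bd (c := C) ((hu.mono hm1 le_rfl).aestronglyMeasurable)
      (Eventually.of_forall hub)
  have hg1bd : ∀ᵐ ω ∂μ, |g1 ω| ≤ C / ε := by
    filter_upwards [hAE] with ω h
    obtain ⟨_, hε1, _, _, _⟩ := h
    have hp : 0 < p1' ω := lt_of_lt_of_le hε hε1
    rw [hg1def]
    show |u ω / p1' ω| ≤ C / ε
    rw [abs_div, abs_of_pos hp]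
    exact div_le_div₀ (le_trans (abs_nonneg _) (hub ω)) (hub ω) hε hε1
  have hg2bd : ∀ᵐ ω ∂μ, |g2 ω| ≤ C / ε := by
    filter_upwards [hAE] with ω h
    obtain ⟨_, hε1, _, _, _⟩ := h
    have hp : 0 < p1' ω := lt_of_lt_of_le hε hε1
    rw [hg2def]
    show |v ω / p1' ω| ≤ C / ε
    rw [abs_div, abs_of_pos hp]
    exact div_le_div₀ (le_trans (abs_nonneg _) (hvb ω)) (hvb ω) hε hε1
  have hg3bd : ∀ᵐ ω ∂μ, |g3 ω| ≤ C / (ε * ε) := by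
    filter_upwards [hAE] with ω h
    obtain ⟨_, hε1, _, hε2, _⟩ := h
    have hp : 0 < p1' ω * p2' ω :=
      mul_pos (lt_of_lt_of_le hε hε1) (lt_of_lt_of_le hε hε2)
    rw [hg3def]
    show |v ω / (p1' ω * p2' ω)| ≤ C / (ε * ε)
    rw [abs_div, abs_of_pos hp]
    exact div_le_div₀ (le_trans (abs_nonneg _) (hvb ω)) (hvb ω)
      (mul_pos hε hε) (mul_le_mul hε1 hε2 (le_of_lt hε) (le_trans (le_of_lt hε) hε1))
  have hg1X : Integrable (fun ω => g1 ω * X1 ω) μ := by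
    refine aux_int_bd (c := C / ε) (((sg1.mono hm1).aestronglyMeasurable).mul
      hX1m.aestronglyMeasurable) ?_
    filter_upwards [hg1bd] with ω h
    rw [abs_mul]
    nlinarith [abs_nonneg (g1 ω), abs_nonneg (X1 ω), hX1b ω]
  have hg2X : Integrable (fun ω => g2 ω * X1 ω) μ := by
    refine aux_int_bd (c := C / ε) (((sg2.mono hm2).aestronglyMeasurable).mul
      hX1m.aestronglyMeasurable) ?_
    filter_upwards [hg2bd] with ω h
    rw [abs_mul]
    nlinarith [abs_nonneg (g2 ω), abs_nonneg (X1 ω), hX1b ω]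
  have hg3X : Integrable (fun ω => g3 ω * (X1 ω * X2 ω)) μ := by
    refine aux_int_bd (c := C / (ε * ε)) (((sg3.mono hm2).aestronglyMeasurable).mul
      (hX1m.mul hX2m).aestronglyMeasurable) ?_
    filter_upwards [hg3bd] with ω h
    rw [abs_mul, abs_mul]
    have h12 : |X1 ω| * |X2 ω| ≤ 1 := by
      nlinarith [abs_nonneg (X1 ω), abs_nonneg (X2 ω), hX1b ω, hX2b ω]
    have h3 : 0 ≤ |g3 ω| := abs_nonneg _
    nlinarith [mul_nonneg (abs_nonneg (X1 ω)) (abs_nonneg (X2 ω))]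
  have K1 : ∫ ω, g1 ω * X1 ω ∂μ = ∫ ω, u ω ∂μ := by
    rw [aux_pullout hm1 hX1int sg1 hg1X]
    refine integral_congr_ae ?_
    filter_upwards [hAE] with ω h
    obtain ⟨_, hε1, _, _, _⟩ := h
    have hne : p1' ω ≠ 0 := ne_of_gt (lt_of_lt_of_le hε hε1)
    show u ω / p1' ω * p1' ω = u ω
    field_simp
  have K2 : ∫ ω, g2 ω * X1 ω ∂μ = ∫ ω, g2 ω * pJ' ω ∂μ :=
    aux_pullout hm2 hX1int sg2 hg2X
  have K3 : ∫ ω, g3 ω * (X1 ω * X2 ω) ∂μ = ∫ ω, g2 ω * pJ' ω ∂μ := by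
    rw [aux_pullout hm2 hX12int sg3 hg3X]
    refine integral_congr_ae ?_
    filter_upwards [hAE] with ω h
    obtain ⟨_, hε1, _, hε2, eρ⟩ := h
    have hne1 : p1' ω ≠ 0 := ne_of_gt (lt_of_lt_of_le hε hε1)
    have hne2 : p2' ω ≠ 0 := ne_of_gt (lt_of_lt_of_le hε hε2)
    show v ω / (p1' ω * p2' ω) * ρ ω = v ω / p1' ω * pJ' ω
    rw [eρ]
    field_simp
  have heq : (fun ω => u ω + X1 ω / p1 ω * (v ω - u ω)
      - X1 ω * X2 ω / (p1 ω * p2 ω) * v ω)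
      =ᵐ[μ] fun ω => u ω + (g2 ω * X1 ω - g1 ω * X1 ω) - g3 ω * (X1 ω * X2 ω) := by
    filter_upwards [hAE] with ω h
    obtain ⟨e1, _, e2, _, _⟩ := h
    simp only [hg1def, hg2def, hg3def]
    rw [e1, e2]
    ring
  have i23 : Integrable (fun ω => g2 ω * X1 ω - g1 ω * X1 ω) μ := hg2X.sub hg1X
  have i123 : Integrable (fun ω => u ω + (g2 ω * X1 ω - g1 ω * X1 ω)) μ := hint1.add i23
  have i1234 : Integrable (fun ω => u ω + (g2 ω * X1 ω - g1 ω * X1 ω)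
      - g3 ω * (X1 ω * X2 ω)) μ := i123.sub hg3X
  refine ⟨i1234.congr heq.symm, ?_⟩
  rw [integral_congr_ae heq, integral_sub i123 hg3X, integral_add hint1 i23,
    integral_sub hg2X hg1X, K1, K2, K3]
  ring

/-- Neyman orthogonality (Lemma 1(iii)) in the outcome direction: the Gateaux
derivative of `E[Ψ(θ, η* + r δ_η, π*)]` in `r` at `r = 0` vanishes, for any bounded
measurable perturbation `δ_η = (δ_η1, δ_η2)` of the iterated conditional means,
holding the propensity scores fixed at their true values. -/
theorem dr_neyman_orthogonality_outcome
    {Ω 𝒵₁ 𝒵₂ : Type*} [MeasurableSpace Ω]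
    [MeasurableSpace 𝒵₁] [MeasurableSpace 𝒵₂]
    (μ : Measure Ω) [IsProbabilityMeasure μ]
    (Z1 : Ω → 𝒵₁) (Z2 : Ω → 𝒵₂) (A1 A2 : Ω → Bool) (Y : Ω → ℝ)
    (hZ1 : Measurable Z1) (hZ2 : Measurable Z2)
    (hA1 : Measurable A1) (hA2 : Measurable A2)
    (hYint : Integrable Y μ)
    (d : Bool → Bool → ℝ)
    -- true propensity scores: π1s b1 = P(A1=b1|Z1), π2s b1 b2 = P(A2=b2|A1=b1,Z1,Z2),
    -- πJ b1 = P(A1=b1|Z1,Z2)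
    (π1s πJ : Bool → Ω → ℝ) (π2s : Bool → Bool → Ω → ℝ) (ε : ℝ) (hε : 0 < ε) 
    (hπ1s : ∀ b1, π1s b1 =ᵐ[μ] μ[ind A1 b1 | MeasurableSpace.comap Z1 inferInstance])
    (hπJ : ∀ b1, πJ b1 =ᵐ[μ]
      μ[ind A1 b1 | MeasurableSpace.comap (fun ω => (Z1 ω, Z2 ω)) inferInstance])
    (hπ2s : ∀ b1 b2, (fun ω => πJ b1 ω * π2s b1 b2 ω) =ᵐ[μ]
      μ[fun ω => ind A1 b1 ω * ind A2 b2 ω |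
        MeasurableSpace.comap (fun ω => (Z1 ω, Z2 ω)) inferInstance])
    (hpos1 : ∀ b1, ∀ᵐ ω ∂μ, ε ≤ π1s b1 ω ∧ π1s b1 ω ≤ 1)
    (hpos2 : ∀ b1 b2, ∀ᵐ ω ∂μ, ε ≤ π2s b1 b2 ω ∧ π2s b1 b2 ω ≤ 1)
    (hposJ : ∀ b1, ∀ᵐ ω ∂μ, 0 < πJ b1 ω)
    -- true outcome regression η2s b1 b2 = E[Y | A1=b1, A2=b2, Z1, Z2]:
    (η2s : Bool → Bool → Ω → ℝ)
    (hη2meas : ∀ b1 b2,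
      Measurable[MeasurableSpace.comap (fun ω => (Z1 ω, Z2 ω)) inferInstance] (η2s b1 b2))
    (hη2 : ∀ b1 b2, (fun ω => πJ b1 ω * π2s b1 b2 ω * η2s b1 b2 ω) =ᵐ[μ]
      μ[fun ω => ind A1 b1 ω * ind A2 b2 ω * Y ω |
        MeasurableSpace.comap (fun ω => (Z1 ω, Z2 ω)) inferInstance])
    -- true iterated mean η1s b1 b2 = E[η2s b1 b2 | A1=b1, Z1]:
    (η1s : Bool → Bool → Ω → ℝ)
    (hη1meas : ∀ b1 b2, Measurable[MeasurableSpace.comap Z1 inferInstance] (η1s b1 b2))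
    (hη1 : ∀ b1 b2, (fun ω => π1s b1 ω * η1s b1 b2 ω) =ᵐ[μ]
      μ[fun ω => ind A1 b1 ω * η2s b1 b2 ω | MeasurableSpace.comap Z1 inferInstance])
    (C : ℝ) (hη2bd : ∀ b1 b2 ω, |η2s b1 b2 ω| ≤ C) (hη1bd : ∀ b1 b2 ω, |η1s b1 b2 ω| ≤ C)
    (τ : Bool → Bool → ℝ)
    -- bounded measurable perturbations of (η1, η2):
    (δ1 δ2 : Bool → Bool → Ω → ℝ)
    (hδ1meas : ∀ b1 b2, Measurable[MeasurableSpace.comap Z1 inferInstance] (δ1 b1 b2))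
    (hδ2meas : ∀ b1 b2,
      Measurable[MeasurableSpace.comap (fun ω => (Z1 ω, Z2 ω)) inferInstance] (δ2 b1 b2))
    (hδ1bd : ∀ b1 b2 ω, |δ1 b1 b2 ω| ≤ C) (hδ2bd : ∀ b1 b2 ω, |δ2 b1 b2 ω| ≤ C) :
    HasDerivAt (fun r : ℝ => ∫ ω, ((∑ b1 : Bool, ∑ b2 : Bool, d b1 b2 * ((η1s b1 b2 ω + r * δ1 b1 b2 ω) - τ b1 b2)) + (∑ b2 : Bool, d (A1 ω) b2 / π1s (A1 ω) ω * ((η2s (A1 ω) b2 ω + r * δ2 (A1 ω) b2 ω) - (η1s (A1 ω) b2 ω + r * δ1 (A1 ω) b2 ω))) + (d (A1 ω) (A2 ω) / (π1s (A1 ω) ω * π2s (A1 ω) (A2 ω) ω) * (Y ω - (η2s (A1 ω) (A2 ω) ω + r * δ2 (A1 ω) (A2 ω) ω)))) ∂μ) 0 0 := by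
  classical
  have hm1 : MeasurableSpace.comap Z1 inferInstance ≤ (inferInstance : MeasurableSpace Ω) :=
    hZ1.comap_le
  have hm2 : MeasurableSpace.comap (fun ω => (Z1 ω, Z2 ω)) inferInstance
      ≤ (inferInstance : MeasurableSpace Ω) := (hZ1.prodMk hZ2).comap_le
  have hpair : Measurable[MeasurableSpace.comap (fun ω => (Z1 ω, Z2 ω)) inferInstance]
      (fun ω => (Z1 ω, Z2 ω)) := Measurable.of_comap_le le_rfl
  have hm12 : MeasurableSpace.comap Z1 inferInstance
      ≤ MeasurableSpace.comap (fun ω => (Z1 ω, Z2 ω)) inferInstance :=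
    Measurable.comap_le (fun s hs => hpair (measurable_fst hs))
  have key := fun b1 b2 => aux_key hm1 hm2 hm12 μ (ind A1 b1) (ind A2 b2)
    (aux_ind_meas hA1 b1) (aux_ind_meas hA2 b2) (aux_ind_bd A1 b1) (aux_ind_bd A2 b2)
    (π1s b1) (πJ b1) (π2s b1 b2) ε hε (hπ1s b1) (hπJ b1) (hπ2s b1 b2)
    ((hpos1 b1).mono fun ω h => h.1) ((hpos2 b1 b2).mono fun ω h => h.1) (hposJ b1)
    (δ1 b1 b2) (δ2 b1 b2) C (hδ1meas b1 b2) (hδ2meas b1 b2) (hδ1bd b1 b2) (hδ2bd b1 b2)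
  -- the derivative direction H
  have hHint : Integrable (fun ω => ∑ b1 : Bool, ∑ b2 : Bool, d b1 b2 *
      (δ1 b1 b2 ω + ind A1 b1 ω / π1s b1 ω * (δ2 b1 b2 ω - δ1 b1 b2 ω)
        - ind A1 b1 ω * ind A2 b2 ω / (π1s b1 ω * π2s b1 b2 ω) * δ2 b1 b2 ω)) μ :=
    integrable_finset_sum _ fun b1 _ => integrable_finset_sum _ fun b2 _ =>
      ((key b1 b2).1).const_mul _
  have hH0 : ∫ ω, (∑ b1 : Bool, ∑ b2 : Bool, d b1 b2 *
      (δ1 b1 b2 ω + ind A1 b1 ω / π1s b1 ω * (δ2 b1 b2 ω - δ1 b1 b2 ω)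
        - ind A1 b1 ω * ind A2 b2 ω / (π1s b1 ω * π2s b1 b2 ω) * δ2 b1 b2 ω)) ∂μ = 0 := by
    have hin : ∀ b1 ∈ (Finset.univ : Finset Bool), Integrable (fun ω => ∑ b2 : Bool,
        d b1 b2 * (δ1 b1 b2 ω + ind A1 b1 ω / π1s b1 ω * (δ2 b1 b2 ω - δ1 b1 b2 ω)
          - ind A1 b1 ω * ind A2 b2 ω / (π1s b1 ω * π2s b1 b2 ω) * δ2 b1 b2 ω)) μ :=
      fun b1 _ => integrable_finset_sum _ fun b2 _ => ((key b1 b2).1).const_mul _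
    have hin2 : ∀ b1 : Bool, ∀ b2 ∈ (Finset.univ : Finset Bool), Integrable (fun ω =>
        d b1 b2 * (δ1 b1 b2 ω + ind A1 b1 ω / π1s b1 ω * (δ2 b1 b2 ω - δ1 b1 b2 ω)
          - ind A1 b1 ω * ind A2 b2 ω / (π1s b1 ω * π2s b1 b2 ω) * δ2 b1 b2 ω)) μ :=
      fun b1 b2 _ => ((key b1 b2).1).const_mul _
    rw [integral_finset_sum _ hin]
    refine Finset.sum_eq_zero fun b1 _ => ?_
    rw [integral_finset_sum _ (hin2 b1)]
    refine Finset.sum_eq_zero fun b2 _ => ?_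
    rw [integral_const_mul, (key b1 b2).2, mul_zero]
  -- a.e.-measurability of the propensity functions
  have hπ1sae : ∀ b1, AEMeasurable (π1s b1) μ := fun b1 =>
    ((stronglyMeasurable_condExp.measurable.mono hm1 le_rfl).aemeasurable).congr
      (hπ1s b1).symm
  have hπ2sae : ∀ b1 b2, AEMeasurable (π2s b1 b2) μ := by
    intro b1 b2
    have hmeas : AEMeasurable (fun ω =>
        (μ[fun ω => ind A1 b1 ω * ind A2 b2 ω |
            MeasurableSpace.comap (fun ω => (Z1 ω, Z2 ω)) inferInstance]) ω /
        (μ[ind A1 b1 | MeasurableSpace.comap (fun ω => (Z1 ω, Z2 ω)) inferInstance]) ω) μ :=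
      ((stronglyMeasurable_condExp.measurable.mono hm2 le_rfl).div
        (stronglyMeasurable_condExp.measurable.mono hm2 le_rfl)).aemeasurable
    refine hmeas.congr ?_
    filter_upwards [hπJ b1, hπ2s b1 b2, hposJ b1] with ω eJ e2 bJ
    have hJne : πJ b1 ω ≠ 0 := ne_of_gt bJ
    rw [← e2, ← eJ]
    field_simp
  -- integrability of the value at r = 0 (in indicator-expanded form)
  have hGint : Integrable (fun ω =>
      (∑ b1 : Bool, ∑ b2 : Bool, d b1 b2 * (η1s b1 b2 ω - τ b1 b2))
      + (∑ b1 : Bool, ∑ b2 : Bool, ind A1 b1 ω *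
          (d b1 b2 / π1s b1 ω * (η2s b1 b2 ω - η1s b1 b2 ω)))
      + (∑ b1 : Bool, ∑ b2 : Bool, (ind A1 b1 ω * ind A2 b2 ω *
          (d b1 b2 / (π1s b1 ω * π2s b1 b2 ω))) * (Y ω - η2s b1 b2 ω))) μ := by
    refine Integrable.add (Integrable.add ?_ ?_) ?_
    · refine integrable_finset_sum _ fun b1 _ => integrable_finset_sum _ fun b2 _ => ?_
      refine aux_int_bd (c := |d b1 b2| * (C + |τ b1 b2|))
        (((((hη1meas b1 b2).mono hm1 le_rfl).sub measurable_const).const_mul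
          (d b1 b2)).aestronglyMeasurable) (Eventually.of_forall fun ω => ?_)
      rw [abs_mul]
      exact mul_le_mul_of_nonneg_left
        ((abs_sub _ _).trans (add_le_add (hη1bd b1 b2 ω) le_rfl)) (abs_nonneg _)
    · refine integrable_finset_sum _ fun b1 _ => integrable_finset_sum _ fun b2 _ => ?_
      refine aux_int_bd (c := |d b1 b2| / ε * (C + C))
        (((aux_ind_meas hA1 b1).aemeasurable.mul ((aemeasurable_const.div (hπ1sae b1)).mul
          ((((hη2meas b1 b2).mono hm2 le_rfl).sub
            ((hη1meas b1 b2).mono hm1 le_rfl)).aemeasurable))).aestronglyMeasurable) ?_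
      filter_upwards [hpos1 b1] with ω h
      have hp1 : 0 < π1s b1 ω := lt_of_lt_of_le hε h.1
      rw [abs_mul, abs_mul, abs_div, abs_of_pos hp1]
      have e2 : |η2s b1 b2 ω - η1s b1 b2 ω| ≤ C + C :=
        (abs_sub _ _).trans (add_le_add (hη2bd b1 b2 ω) (hη1bd b1 b2 ω))
      have e3 : |d b1 b2| / π1s b1 ω ≤ |d b1 b2| / ε := by
        rw [div_eq_mul_inv, div_eq_mul_inv]
        refine mul_le_mul_of_nonneg_left ?_ (abs_nonneg _)
        rw [← one_div, ← one_div]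
        exact one_div_le_one_div_of_le hε h.1
      have t1 : |d b1 b2| / π1s b1 ω * |η2s b1 b2 ω - η1s b1 b2 ω|
          ≤ |d b1 b2| / ε * (C + C) :=
        mul_le_mul e3 e2 (abs_nonneg _)
          (div_nonneg (abs_nonneg _) (le_of_lt (lt_of_lt_of_le hε le_rfl)))
      have t2 : |ind A1 b1 ω| * (|d b1 b2| / π1s b1 ω * |η2s b1 b2 ω - η1s b1 b2 ω|)
          ≤ 1 * (|d b1 b2| / ε * (C + C)) :=
        mul_le_mul (aux_ind_bd _ _ _) t1
          (mul_nonneg (div_nonneg (abs_nonneg _) (le_of_lt hp1)) (abs_nonneg _))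
          zero_le_one
      rw [one_mul] at t2
      exact t2
    · refine integrable_finset_sum _ fun b1 _ => integrable_finset_sum _ fun b2 _ => ?_
      have hYη : Integrable (fun ω => Y ω - η2s b1 b2 ω) μ :=
        hYint.sub (aux_int_bd (c := C)
          ((hη2meas b1 b2).mono hm2 le_rfl).aestronglyMeasurable
          (Eventually.of_forall (hη2bd b1 b2)))
      refine hYη.bdd_mul (c := |d b1 b2| / (ε * ε))
        ((((aux_ind_meas hA1 b1).mul (aux_ind_meas hA2 b2)).aemeasurable.mul
          (aemeasurable_const.div ((hπ1sae b1).mul (hπ2sae b1 b2)))).aestronglyMeasurable) ?_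
      filter_upwards [hpos1 b1, hpos2 b1 b2] with ω h1 h2
      have hp1 : 0 < π1s b1 ω := lt_of_lt_of_le hε h1.1
      have hp2 : 0 < π2s b1 b2 ω := lt_of_lt_of_le hε h2.1
      rw [Real.norm_eq_abs, abs_mul, abs_div, abs_of_pos (mul_pos hp1 hp2)]
      have e12 : |ind A1 b1 ω * ind A2 b2 ω| ≤ 1 := by
        rw [abs_mul]
        nlinarith [abs_nonneg (ind A1 b1 ω), abs_nonneg (ind A2 b2 ω),
          aux_ind_bd A1 b1 ω, aux_ind_bd A2 b2 ω]
      have e3 : |d b1 b2| / (π1s b1 ω * π2s b1 b2 ω) ≤ |d b1 b2| / (ε * ε) := by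
        rw [div_eq_mul_inv, div_eq_mul_inv]
        refine mul_le_mul_of_nonneg_left ?_ (abs_nonneg _)
        rw [← one_div, ← one_div]
        exact one_div_le_one_div_of_le (mul_pos hε hε)
          (mul_le_mul h1.1 h2.1 (le_of_lt hε) (le_of_lt hp1))
      have e4 := mul_le_mul e12 e3
        (div_nonneg (abs_nonneg _) (le_of_lt (mul_pos hp1 hp2))) zero_le_one
      rw [one_mul] at e4
      exact e4
  -- affine decomposition of the integrand
  have haff : ∀ r : ℝ, ∀ ω : Ω,
      ((∑ b1 : Bool, ∑ b2 : Bool, d b1 b2 * ((η1s b1 b2 ω + r * δ1 b1 b2 ω) - τ b1 b2))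
      + (∑ b2 : Bool, d (A1 ω) b2 / π1s (A1 ω) ω * ((η2s (A1 ω) b2 ω + r * δ2 (A1 ω) b2 ω)
          - (η1s (A1 ω) b2 ω + r * δ1 (A1 ω) b2 ω)))
      + (d (A1 ω) (A2 ω) / (π1s (A1 ω) ω * π2s (A1 ω) (A2 ω) ω)
          * (Y ω - (η2s (A1 ω) (A2 ω) ω + r * δ2 (A1 ω) (A2 ω) ω))))
      = ((∑ b1 : Bool, ∑ b2 : Bool, d b1 b2 * (η1s b1 b2 ω - τ b1 b2))
        + (∑ b1 : Bool, ∑ b2 : Bool, ind A1 b1 ω *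
            (d b1 b2 / π1s b1 ω * (η2s b1 b2 ω - η1s b1 b2 ω)))
        + (∑ b1 : Bool, ∑ b2 : Bool, (ind A1 b1 ω * ind A2 b2 ω *
            (d b1 b2 / (π1s b1 ω * π2s b1 b2 ω))) * (Y ω - η2s b1 b2 ω)))
      + r * (∑ b1 : Bool, ∑ b2 : Bool, d b1 b2 *
          (δ1 b1 b2 ω + ind A1 b1 ω / π1s b1 ω * (δ2 b1 b2 ω - δ1 b1 b2 ω)
            - ind A1 b1 ω * ind A2 b2 ω / (π1s b1 ω * π2s b1 b2 ω) * δ2 b1 b2 ω)) := by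
    intro r ω
    simp only [Fintype.sum_bool, ind]
    cases h1 : A1 ω <;> cases h2 : A2 ω <;> simp [h1, h2] <;> ring
  have hfun : (fun r : ℝ => ∫ ω, ((∑ b1 : Bool, ∑ b2 : Bool, d b1 b2 * ((η1s b1 b2 ω + r * δ1 b1 b2 ω) - τ b1 b2)) + (∑ b2 : Bool, d (A1 ω) b2 / π1s (A1 ω) ω * ((η2s (A1 ω) b2 ω + r * δ2 (A1 ω) b2 ω) - (η1s (A1 ω) b2 ω + r * δ1 (A1 ω) b2 ω))) + (d (A1 ω) (A2 ω) / (π1s (A1 ω) ω * π2s (A1 ω) (A2 ω) ω) * (Y ω - (η2s (A1 ω) (A2 ω) ω + r * δ2 (A1 ω) (A2 ω) ω)))) ∂μ)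
      = fun r : ℝ => (∫ ω, ((∑ b1 : Bool, ∑ b2 : Bool, d b1 b2 * (η1s b1 b2 ω - τ b1 b2))
        + (∑ b1 : Bool, ∑ b2 : Bool, ind A1 b1 ω *
            (d b1 b2 / π1s b1 ω * (η2s b1 b2 ω - η1s b1 b2 ω)))
        + (∑ b1 : Bool, ∑ b2 : Bool, (ind A1 b1 ω * ind A2 b2 ω *
            (d b1 b2 / (π1s b1 ω * π2s b1 b2 ω))) * (Y ω - η2s b1 b2 ω))) ∂μ)
        + r * ∫ ω, (∑ b1 : Bool, ∑ b2 : Bool, d b1 b2 *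
          (δ1 b1 b2 ω + ind A1 b1 ω / π1s b1 ω * (δ2 b1 b2 ω - δ1 b1 b2 ω)
            - ind A1 b1 ω * ind A2 b2 ω / (π1s b1 ω * π2s b1 b2 ω) * δ2 b1 b2 ω)) ∂μ := by
    funext r
    rw [integral_congr_ae (Eventually.of_forall (haff r))]
    rw [integral_add hGint (hHint.const_mul r), integral_const_mul]
  rw [hfun, hH0]
  simpa using ((hasDerivAt_id (0:ℝ)).mul_const (0:ℝ)).const_add (∫ ω,
      ((∑ b1 : Bool, ∑ b2 : Bool, d b1 b2 * (η1s b1 b2 ω - τ b1 b2))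
        + (∑ b1 : Bool, ∑ b2 : Bool, ind A1 b1 ω *
            (d b1 b2 / π1s b1 ω * (η2s b1 b2 ω - η1s b1 b2 ω)))
        + (∑ b1 : Bool, ∑ b2 : Bool, (ind A1 b1 ω * ind A2 b2 ω *
            (d b1 b2 / (π1s b1 ω * π2s b1 b2 ω))) * (Y ω - η2s b1 b2 ω))) ∂μ)
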